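/- Let n ≥ 3 and B ≥ 1 be integers, let p_sr ≥ 0, p_rd > 0 and ρ ∈ [0,1] be real numbers with ρ·p_sr + p_rd ≤ 1, and set β = p_sr/p_rd and C_i = C(n−3+i, i). Define the (B+1)×(B+1) real matrix P by P(i, i+1) = ρ·p_sr for 0 ≤ i ≤ B−1, P(i, i−1) = (i/(n−3+i))·p_rd for 1 ≤ i ≤ B, P(i, i) = 1 − P(i, i+1) − P(i, i−1) (with absent entries taken as 0), and P(i, j) = 0 for |i−j| ≥ 2. Define π_i = C_i·β^i·ρ^i / (∑_{j=0}^{B} C_j·β^j·ρ^j) for 0 ≤ i ≤ B. Then ∑_{i=0}^{B} π_i = 1 and ∑_{i=0}^{B} π_i·P(i, j) = π_j for every 0 ≤ j ≤ B. -/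

import Mathlib

/-- Lemma 2: the limiting (stationary) distribution of the embedded Markov chain. -/
theorem stmt3 (n B : ℕ) (hn : 3 ≤ n) (hB : 1 ≤ B)
    (p_sr p_rd ρ β : ℝ) (hsr : 0 ≤ p_sr) (hrd : 0 < p_rd)
    (hρ0 : 0 ≤ ρ) (hρ1 : ρ ≤ 1) (hstoch : ρ * p_sr + p_rd ≤ 1)
    (hβ : β = p_sr / p_rd)
    (P : ℕ → ℕ → ℝ)
    (hPup : ∀ i < B, P i (i + 1) = ρ * p_sr)
    (hPdown : ∀ i, 1 ≤ i → i ≤ B →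
      P i (i - 1) = (i : ℝ) / ((n - 3 + i : ℕ) : ℝ) * p_rd)
    (hPdiag : ∀ i ≤ B, P i i =
      1 - (if i < B then ρ * p_sr else 0)
        - (if 1 ≤ i then (i : ℝ) / ((n - 3 + i : ℕ) : ℝ) * p_rd else 0))
    (hPzero : ∀ i ≤ B, ∀ j ≤ B, i + 2 ≤ j ∨ j + 2 ≤ i → P i j = 0)
    (piv : ℕ → ℝ)
    (hpiv : ∀ i ≤ B, piv i = ((n - 3 + i).choose i : ℝ) * β ^ i * ρ ^ i
        / ∑ j ∈ Finset.range (B + 1), ((n - 3 + j).choose j : ℝ) * β ^ j * ρ ^ j) :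
    (∑ i ∈ Finset.range (B + 1), piv i = 1) ∧
    ∀ j ≤ B, ∑ i ∈ Finset.range (B + 1), piv i * P i j = piv j := by
  set a : ℕ → ℝ := fun i => ((n - 3 + i).choose i : ℝ) * β ^ i * ρ ^ i with ha
  have hβ0 : 0 ≤ β := by rw [hβ]; positivity
  have hβp : β * p_rd = p_sr := by rw [hβ]; field_simp
  have ha0 : a 0 = 1 := by simp [ha]
  have hanonneg : ∀ i, 0 ≤ a i := fun i => by
    have : (0:ℝ) ≤ ((n - 3 + i).choose i : ℝ) := Nat.cast_nonneg _
    positivity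
  set S : ℝ := ∑ j ∈ Finset.range (B + 1), a j with hSdef
  have hS : 0 < S := by
    have h1 : a 0 ≤ S :=
      Finset.single_le_sum (f := a) (fun i _ => hanonneg i) (by simp)
    rw [ha0] at h1; linarith
  have hpiv' : ∀ i ≤ B, piv i = a i / S := hpiv
  -- detailed balance
  have hDB : ∀ i,
      a (i + 1) * (((i + 1 : ℕ) : ℝ) / ((n - 3 + (i + 1) : ℕ) : ℝ) * p_rd)
        = a i * (ρ * p_sr) := by
    intro i
    simp only [ha]
    rw [← hβp]
    have e1 : n - 3 + (i + 1) = (n - 3 + i) + 1 := by omega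
    rw [e1]
    generalize n - 3 + i = m
    have hmnat : (m + 1).choose (i + 1) * (i + 1) = (m + 1) * m.choose i :=
      (Nat.add_one_mul_choose_eq m i).symm
    have hm : ((m + 1).choose (i + 1) : ℝ) * ((i : ℝ) + 1)
        = ((m : ℝ) + 1) * (m.choose i : ℝ) := by exact_mod_cast hmnat
    have hd : ((m : ℝ) + 1) ≠ 0 := by positivity
    push_cast
    field_simp
    linear_combination (β ^ (i + 1) * ρ ^ (i + 1)) * hm
  -- stationarity for unnormalized weights
  have hmain : ∀ j ≤ B, ∑ i ∈ Finset.range (B + 1), a i * P i j = a j := by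
    intro j hj
    have hfilter : ∑ i ∈ Finset.range (B + 1), a i * P i j
        = ∑ i ∈ (Finset.range (B + 1)).filter (fun i => i ≤ j + 1 ∧ j ≤ i + 1),
            a i * P i j := by
      refine (Finset.sum_filter_of_ne ?_).symm
      intro i hi hne
      by_contra hcon
      have hiB : i ≤ B := Nat.lt_succ_iff.mp (Finset.mem_range.mp hi)
      have : P i j = 0 := hPzero i hiB j hj (by omega)
      exact hne (by rw [this, mul_zero])
    rw [hfilter]
    rcases Nat.eq_zero_or_pos j with hj0 | hj1
    · -- j = 0
      subst hj0
      have hset : (Finset.range (B + 1)).filter (fun i => i ≤ 0 + 1 ∧ 0 ≤ i + 1)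
          = {0, 1} := by
        ext i
        simp only [Finset.mem_filter, Finset.mem_range, Finset.mem_insert,
          Finset.mem_singleton]
        omega
      rw [hset, Finset.sum_pair (by omega)]
      rw [hPdiag 0 (by omega), hPdown 1 le_rfl hB,
        if_pos (show 0 < B from hB), if_neg (by omega)]
      have h1 := hDB 0
      push_cast at h1 ⊢
      linear_combination h1
    · rcases Nat.lt_or_ge j B with hjB | hjB
      · -- 1 ≤ j < B
        obtain ⟨k, rfl⟩ : ∃ k, j = k + 1 := ⟨j - 1, by omega⟩
        have hset : (Finset.range (B + 1)).filter
            (fun i => i ≤ (k + 1) + 1 ∧ (k + 1) ≤ i + 1)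
            = {k, k + 1, k + 2} := by
          ext i
          simp only [Finset.mem_filter, Finset.mem_range, Finset.mem_insert,
            Finset.mem_singleton]
          omega
        rw [hset,
          Finset.sum_insert (by
            simp only [Finset.mem_insert, Finset.mem_singleton]; omega),
          Finset.sum_insert (by
            simp only [Finset.mem_singleton]; omega),
          Finset.sum_singleton]
        have hdn : P (k + 2) (k + 1)
            = ((k + 2 : ℕ) : ℝ) / ((n - 3 + (k + 2) : ℕ) : ℝ) * p_rd := by
          have h := hPdown (k + 2) (by omega) (by omega)
          simpa using h
        rw [hPup k (by omega), hPdiag (k + 1) (by omega),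
          if_pos hjB, if_pos (show 1 ≤ k + 1 by omega), hdn]
        have h1 := hDB k
        have h2 := hDB (k + 1)
        push_cast at h1 h2 ⊢
        linear_combination h2 - h1
      · -- j = B
        obtain ⟨k, rfl⟩ : ∃ k, j = k + 1 := ⟨j - 1, by omega⟩
        have hkB : k + 1 = B := le_antisymm hj hjB
        have hset : (Finset.range (B + 1)).filter
            (fun i => i ≤ (k + 1) + 1 ∧ (k + 1) ≤ i + 1)
            = {k, k + 1} := by
          ext i
          simp only [Finset.mem_filter, Finset.mem_range, Finset.mem_insert,
            Finset.mem_singleton]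
          omega
        rw [hset, Finset.sum_pair (by omega)]
        rw [hPup k (by omega), hPdiag (k + 1) (by omega),
          if_neg (by omega), if_pos (show 1 ≤ k + 1 by omega)]
        have h1 := hDB k
        push_cast at h1 ⊢
        linear_combination -h1
  constructor
  · rw [Finset.sum_congr rfl
      (fun i hi => hpiv' i (Nat.lt_succ_iff.mp (Finset.mem_range.mp hi)))]
    rw [← Finset.sum_div, ← hSdef, div_self hS.ne']
  · intro j hj
    have hkey : ∑ i ∈ Finset.range (B + 1), piv i * P i j
        = (∑ i ∈ Finset.range (B + 1), a i * P i j) / S := by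
      rw [Finset.sum_div]
      refine Finset.sum_congr rfl fun i hi => ?_
      rw [hpiv' i (Nat.lt_succ_iff.mp (Finset.mem_range.mp hi))]
      ring
    rw [hkey, hmain j hj, ← hpiv' j hj]
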